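/- Let k be a positive integer and let A be a syndetic subset of the natural numbers. Then there exist x, r ∈ ℕ and a composite number n (i.e., n ∈ ℕ, n > 1, n not prime) such that r ≡ 1 (mod n), x ∈ A, and x·n^k·r ∈ A; i.e., A contains a 2-term geometric progression with common ratio n^k·r. -/

import Mathlib

/-- `A` is `l`-syndetic: it meets every block of `l` consecutive positive integers. -/
def SyndeticWith (A : Set ℕ) (l : ℕ) : Prop :=
  ∀ n : ℕ, 0 < n → ∃ m ∈ A, n ≤ m ∧ m < n + l

/-- `A` is syndetic if it is `l`-syndetic for some positive integer `l`. -/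
def Syndetic (A : Set ℕ) : Prop :=
  ∃ l : ℕ, 0 < l ∧ SyndeticWith A l

private lemma coprime_of_modEq_one {n c : ℕ} (hn : 1 ≤ n) (h : n ≡ 1 [MOD c]) :
    Nat.Coprime n c := by
  have hdvd : c ∣ n - 1 := (Nat.modEq_iff_dvd' hn).mp h.symm
  have h3 : Nat.gcd n c ∣ 1 := by
    have h4 := Nat.dvd_sub (Nat.gcd_dvd_left n c) ((Nat.gcd_dvd_right n c).trans hdvd)
    simpa [Nat.sub_sub_self hn] using h4
  exact Nat.dvd_one.mp h3

private lemma square_not_prime (m : ℕ) (hm : 2 ≤ m) : ¬ (m * m).Prime := by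
  intro h
  rcases h.eq_one_or_self_of_dvd m ⟨m, rfl⟩ with h1 | h1
  · omega
  · nlinarith

/-- Hand-rolled CRT stage: given a list of pairs `(c, t)`, find a base `Q₀` and modulus `M`
(multiple of `Λ`) with `Q₀ ≡ T (mod Λ)` such that for each pair there is a composite
`n ≡ 1 (mod Λ)` with `n^(k+1) ∣ M` and `Q₀ + t ≡ c * n^k (mod n^(k+1))`. -/
private lemma innerCRT (k Λ T : ℕ) (hΛ : 0 < Λ) (ps : List (ℕ × ℕ)) :
    ∃ M Q₀ : ℕ, 0 < M ∧ Λ ∣ M ∧ Q₀ ≡ T [MOD Λ] ∧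
      ∀ p ∈ ps, ∃ n : ℕ, 1 < n ∧ ¬ n.Prime ∧ n ≡ 1 [MOD Λ] ∧ n ^ (k+1) ∣ M ∧
        Q₀ + p.2 ≡ p.1 * n ^ k [MOD n ^ (k+1)] := by
  induction ps with
  | nil => exact ⟨Λ, T, hΛ, dvd_rfl, Nat.ModEq.refl T, by simp⟩
  | cons p ps ih =>
    obtain ⟨M, Q₀, hM, hΛM, hQT, hps⟩ := ih
    obtain ⟨c, t⟩ := p
    set n : ℕ := (1 + M) * (1 + M) with hndef
    have hnexp : n = M * (M + 2) + 1 := by rw [hndef]; ring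
    have hn1 : 1 < n := by nlinarith
    have hnprime : ¬ n.Prime := square_not_prime _ (by omega)
    have hnM : n ≡ 1 [MOD M] :=
      ((Nat.modEq_iff_dvd' (by omega)).mpr ⟨M + 2, by omega⟩).symm
    have hnΛ : n ≡ 1 [MOD Λ] := hnM.of_dvd hΛM
    have hco : Nat.Coprime M (n ^ (k+1)) :=
      (Nat.Coprime.pow_left _ (coprime_of_modEq_one (by omega) hnM)).symm
    obtain ⟨Z, hZ1, hZ2⟩ := Nat.chineseRemainder hco (Q₀ + t) (c * n ^ k)
    have hpow : 0 < n ^ (k+1) := pow_pos (by omega) _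
    have hMn : 0 < M * n ^ (k+1) := Nat.mul_pos hM hpow
    set W : ℕ := Z + (t + 1) * (M * n ^ (k+1)) with hWdef
    have hWt : t ≤ W := by
      have h5 : t + 1 ≤ (t + 1) * (M * n ^ (k+1)) := Nat.le_mul_of_pos_right _ hMn
      omega
    set Q₁ : ℕ := W - t with hQ₁def
    have hQ₁t : Q₁ + t = W := by omega
    have hWZ : Z ≡ W [MOD M] := by
      refine (Nat.modEq_iff_dvd' (by omega)).mpr ⟨(t + 1) * n ^ (k+1), ?_⟩
      have h5 : (t + 1) * (M * n ^ (k+1)) = M * ((t + 1) * n ^ (k+1)) := by ring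
      omega
    have hWZn : Z ≡ W [MOD n ^ (k+1)] := by
      refine (Nat.modEq_iff_dvd' (by omega)).mpr ⟨(t + 1) * M, ?_⟩
      have h5 : (t + 1) * (M * n ^ (k+1)) = n ^ (k+1) * ((t + 1) * M) := by ring
      omega
    have hQ₁Q₀ : Q₁ ≡ Q₀ [MOD M] := by
      have h6 : Q₁ + t ≡ Q₀ + t [MOD M] := by
        rw [hQ₁t]; exact hWZ.symm.trans hZ1
      exact Nat.ModEq.add_right_cancel' t h6
    refine ⟨M * n ^ (k+1), Q₁, hMn, hΛM.trans ⟨n ^ (k+1), rfl⟩,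
      (hQ₁Q₀.of_dvd hΛM).trans hQT, ?_⟩
    intro q hq
    rcases List.mem_cons.mp hq with h | h
    · subst h
      refine ⟨n, hn1, hnprime, hnΛ, ⟨M, mul_comm _ _⟩, ?_⟩
      show Q₁ + t ≡ c * n ^ k [MOD n ^ (k+1)]
      rw [hQ₁t]
      exact hWZn.symm.trans hZ2
    · obtain ⟨n', h1, h2, h3, h4, h5⟩ := hps q h
      refine ⟨n', h1, h2, h3, h4.trans ⟨n ^ (k+1), rfl⟩, ?_⟩
      exact ((hQ₁Q₀.of_dvd h4).add_right _).trans h5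

/-- Build the window bases: positive, chained modulo factorials, and pairwise good. -/
private lemma buildWindows (k l : ℕ) (hl : 0 < l) (m : ℕ) :
    ∃ P : ℕ → ℕ, (∀ i, 0 < P i) ∧
      (∀ i j, i < j → j ≤ m → ∃ d, P j = P i + (P i + l).factorial * d) ∧
      (∀ i j, i < j → j ≤ m → ∀ t, t < l →
        ∃ n r : ℕ, 1 < n ∧ ¬ n.Prime ∧ 0 < r ∧ r ≡ 1 [MOD n] ∧
          P j + t = (P i + t) * n ^ k * r) := by
  induction m with
  | zero => exact ⟨fun _ => 1, fun _ => one_pos, fun i j h1 h2 => by omega,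
      fun i j h1 h2 => by omega⟩
  | succ m ih =>
    obtain ⟨P, hPpos, hchain, hgood⟩ := ih
    set T : ℕ := P m with hTdef
    set Λ : ℕ := (T + l).factorial with hΛdef
    have hΛpos : 0 < Λ := Nat.factorial_pos _
    have hmono : ∀ i, i ≤ m → P i ≤ T := by
      intro i hi
      rcases eq_or_lt_of_le hi with h | h
      · rw [h]
      · obtain ⟨d, hd⟩ := hchain i m h le_rfl
        rw [hTdef, hd]; omega
    set ps : List (ℕ × ℕ) :=
      (List.range (m+1)).flatMap (fun i => (List.range l).map (fun t => (P i + t, t))) with hpsdef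
    have hmem : ∀ i t, i ≤ m → t < l → (P i + t, t) ∈ ps := by
      intro i t hi ht
      rw [hpsdef]
      refine List.mem_flatMap.mpr ⟨i, List.mem_range.mpr (by omega), ?_⟩
      exact List.mem_map.mpr ⟨t, List.mem_range.mpr ht, rfl⟩
    obtain ⟨M, Q₀, hM, hΛM, hQT, hps⟩ := innerCRT k Λ T hΛpos ps
    set Q : ℕ := Q₀ + (T + 1) * M with hQdef
    have hQge : T + 1 ≤ Q := by
      have h5 : T + 1 ≤ (T + 1) * M := Nat.le_mul_of_pos_right _ hM
      omega
    have hQT' : Q ≡ T [MOD Λ] := by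
      have h1 : Q₀ + (T + 1) * M ≡ T + 0 [MOD Λ] :=
        hQT.add (Nat.modEq_zero_iff_dvd.mpr (hΛM.mul_left _))
      simpa [hQdef] using h1
    have hQmodM : ∀ e : ℕ, e ∣ M → Q ≡ Q₀ [MOD e] := by
      intro e he
      have h7 : (T + 1) * M ≡ 0 [MOD e] :=
        Nat.modEq_zero_iff_dvd.mpr (he.mul_left _)
      have h8 : Q₀ + (T + 1) * M ≡ Q₀ + 0 [MOD e] := (Nat.ModEq.refl Q₀).add h7
      simpa [hQdef] using h8
    -- chain from each old index to Q
    have hchainQ : ∀ i, i ≤ m → ∃ d, Q = P i + (P i + l).factorial * d := by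
      intro i hi
      have hfd : (P i + l).factorial ∣ Λ :=
        Nat.factorial_dvd_factorial (by have := hmono i hi; omega)
      have hQT2 : Λ ∣ Q - T := (Nat.modEq_iff_dvd' (by omega)).mp hQT'.symm
      obtain ⟨u, hu⟩ := hfd
      obtain ⟨v, hv⟩ := hQT2
      have hTi : ∃ d0, T = P i + (P i + l).factorial * d0 := by
        rcases eq_or_lt_of_le hi with h | h
        · exact ⟨0, by rw [hTdef, h]; ring⟩
        · exact hchain i m h le_rfl
      obtain ⟨d0, hd0⟩ := hTi
      refine ⟨d0 + u * v, ?_⟩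
      have hQeq : Q = T + Λ * v := by omega
      rw [hQeq, hd0, hu]; ring
    -- define the new sequence
    refine ⟨fun i => if i ≤ m then P i else Q, ?_, ?_, ?_⟩
    · intro i
      by_cases h : i ≤ m
      · simpa [h] using hPpos i
      · simp only [h, if_false]; omega
    · intro i j hij hjm
      by_cases hj : j ≤ m
      · have hi : i ≤ m := by omega
        simpa [hi, hj] using hchain i j hij hj
      · have hjq : j = m + 1 := by omega
        have hi : i ≤ m := by omega
        simpa [hi, hj] using hchainQ i hi
    · intro i j hij hjm t ht
      by_cases hj : j ≤ m
      · have hi : i ≤ m := by omega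
        simpa [hi, hj] using hgood i j hij hj t ht
      · have hi : i ≤ m := by omega
        simp only [hi, if_true, hj, if_false]
        -- target : ∃ n r, ... ∧ Q + t = (P i + t) * n ^ k * r
        set c : ℕ := P i + t with hcdef
        have hcpos : 0 < c := by have := hPpos i; omega
        have hcle : c ≤ T + l := by have := hmono i hi; omega
        have hcΛ : c ∣ Λ := Nat.dvd_factorial hcpos hcle
        obtain ⟨n, hn1, hnpr, hnΛ, hnM, hmodn⟩ := hps (c, t) (hmem i t hi ht)
        have hnpos : 0 < n := by omega
        -- c divides Q + t
        have hcfact : c ∣ (P i + l).factorial := Nat.dvd_factorial hcpos (by omega)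
        obtain ⟨d, hd⟩ := hchainQ i hi
        have hcQt : c ∣ Q + t := by
          obtain ⟨w, hw⟩ := hcfact
          exact ⟨1 + w * d, by rw [hd, hw, hcdef]; ring⟩
        -- Q + t ≡ c * n^k mod n^(k+1)
        have hQt_n : Q + t ≡ c * n ^ k [MOD n ^ (k+1)] :=
          ((hQmodM _ hnM).add_right t).trans hmodn
        -- Q + t ≡ c * n^k mod c
        have hQt_c : Q + t ≡ c * n ^ k [MOD c] := by
          have h1 : Q + t ≡ 0 [MOD c] := Nat.modEq_zero_iff_dvd.mpr hcQt
          have h2 : c * n ^ k ≡ 0 [MOD c] :=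
            Nat.modEq_zero_iff_dvd.mpr ⟨n ^ k, rfl⟩
          exact h1.trans h2.symm
        -- combine
        have hcon : Nat.Coprime c (n ^ (k+1)) :=
          (Nat.Coprime.pow_left _ (coprime_of_modEq_one (by omega)
            (hnΛ.of_dvd hcΛ))).symm
        have hQt_cn : Q + t ≡ c * n ^ k [MOD c * n ^ (k+1)] :=
          (Nat.modEq_and_modEq_iff_modEq_mul hcon).mp ⟨hQt_c, hQt_n⟩
        -- extract the quotient
        have hlt : c * n ^ k < c * n ^ (k+1) := by
          have : n ^ k < n ^ (k+1) := Nat.pow_lt_pow_right hn1 (by omega)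
          exact Nat.mul_lt_mul_of_le_of_lt le_rfl this hcpos
        have hmodval : (Q + t) % (c * n ^ (k+1)) = c * n ^ k := by
          have h1 : (Q + t) % (c * n ^ (k+1)) = (c * n ^ k) % (c * n ^ (k+1)) := hQt_cn
          rw [h1, Nat.mod_eq_of_lt hlt]
        have hdiv := Nat.div_add_mod (Q + t) (c * n ^ (k+1))
        set q : ℕ := (Q + t) / (c * n ^ (k+1)) with hqdef
        refine ⟨n, n * q + 1, hn1, hnpr, by omega, ?_, ?_⟩
        · show n * q + 1 ≡ 1 [MOD n]
          have : n * q + 1 ≡ 0 + 1 [MOD n] :=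
            (Nat.modEq_zero_iff_dvd.mpr ⟨q, rfl⟩).add_right 1
          simpa using this
        · have hQteq : Q + t = c * n ^ (k+1) * q + c * n ^ k := by omega
          rw [hQteq]; ring

/-- every syndetic set contains a 2-term geometric progression with
common ratio `n ^ k * r` where `n` is composite and `r ≡ 1 (mod n)`. -/
theorem syndetic_geometric_composite_power (k : ℕ) (hk : 0 < k) (A : Set ℕ)
    (hA : Syndetic A) :
    ∃ x r n : ℕ, 1 < n ∧ ¬ n.Prime ∧ 0 < r ∧ r ≡ 1 [MOD n] ∧
      x ∈ A ∧ x * n ^ k * r ∈ A := by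
  obtain ⟨l, hl, hsyn⟩ := hA
  obtain ⟨P, hPpos, _, hgood⟩ := buildWindows k l hl l
  -- pick an element of A in each window [P i, P i + l)
  have hwin : ∀ i : Fin (l + 1), ∃ y, y ∈ A ∧ P i.val ≤ y ∧ y < P i.val + l := by
    intro i
    obtain ⟨y, hyA, hy1, hy2⟩ := hsyn (P i.val) (hPpos i.val)
    exact ⟨y, hyA, hy1, hy2⟩
  choose y hyA hy1 hy2 using hwin
  -- offsets
  have hofl : ∀ i, y i - P i.val < l := fun i => by have := hy1 i; have := hy2 i; omega
  let f : Fin (l + 1) → Fin l := fun i => ⟨y i - P i.val, hofl i⟩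
  obtain ⟨a, b, hab, hfab⟩ := Fintype.exists_ne_map_eq_of_card_lt f (by simp)
  have hvalne : a.val ≠ b.val := fun h => hab (Fin.ext h)
  -- orient so that a' < b'
  obtain ⟨a', b', hlt, hfe⟩ : ∃ a' b' : Fin (l + 1), a'.val < b'.val ∧ f a' = f b' := by
    rcases Nat.lt_or_ge a.val b.val with h | h
    · exact ⟨a, b, h, hfab⟩
    · exact ⟨b, a, by omega, hfab.symm⟩
  set t : ℕ := y a' - P a'.val with htdef
  have ht : t < l := hofl a'
  have hteq : y b' - P b'.val = t := by
    have := congrArg Fin.val hfe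
    simpa [f] using this.symm
  have hya : y a' = P a'.val + t := by have := hy1 a'; omega
  have hyb : y b' = P b'.val + t := by have := hy1 b'; omega
  obtain ⟨n, r, hn1, hnpr, hr, hrmod, heq⟩ :=
    hgood a'.val b'.val hlt (by omega) t ht
  refine ⟨y a', r, n, hn1, hnpr, hr, hrmod, hyA a', ?_⟩
  have : y a' * n ^ k * r = y b' := by rw [hya, hyb, heq]
  rw [this]
  exact hyA b'
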